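/- arXiv:1007.0578 — 2 statements merged into one kernel-verified Lean document; each statement's English description precedes it below -/
import Mathlib

section
/- Every subgroup of the Klein bottle group is either trivial, infinite cyclic, isomorphic to ℤ × ℤ, or isomorphic to the Klein bottle group itself. In particular, every subgroup of the Klein bottle group contains an abelian subgroup of index at most 2 which is trivial, infinite cyclic, or isomorphic to ℤ × ℤ. -/
/-- The action of `ℤ` on `ℤ` in which the generator acts by negation
(written multiplicatively). -/
def kleinBottleAction : Multiplicative ℤ →* MulAut (Multiplicative ℤ) :=
  zpowersHom (MulAut (Multiplicative ℤ)) (MulEquiv.inv (Multiplicative ℤ))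

/-- The Klein bottle group `⟨a, b ∣ a b a⁻¹ = b⁻¹⟩`, realized as the semidirect
product `ℤ ⋊ ℤ` where the generator of the acting copy of `ℤ` acts on the normal
copy of `ℤ` by negation. -/
abbrev KleinBottleGroup : Type :=
  SemidirectProduct (Multiplicative ℤ) (Multiplicative ℤ) kleinBottleAction


open Subgroup SemidirectProduct Multiplicative

/-- Every subgroup of `Multiplicative ℤ` is cyclic. -/
lemma multZ_subgroup (S : Subgroup (Multiplicative ℤ)) : ∃ a, S = Subgroup.zpowers a := by
  obtain ⟨g, hg⟩ := Int.subgroup_cyclic (Subgroup.toAddSubgroup' S)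
  refine ⟨ofAdd g, ?_⟩
  ext x
  have hmem : x ∈ S ↔ toAdd x ∈ AddSubgroup.closure ({g} : Set ℤ) := by
    rw [← hg]; rfl
  rw [hmem, AddSubgroup.mem_closure_singleton, Subgroup.mem_zpowers_iff]
  constructor
  · rintro ⟨n, hn⟩
    exact ⟨n, by apply toAdd.injective; simpa [toAdd_zpow] using hn⟩
  · rintro ⟨n, hn⟩
    exact ⟨n, by simpa [toAdd_zpow] using congrArg toAdd hn⟩

lemma multZ_zpow_injective {x : Multiplicative ℤ} (hx : x ≠ 1) :
    Function.Injective fun n : ℤ => x ^ n := by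
  intro n m hnm
  have hx' : toAdd x ≠ 0 := fun h => hx (toAdd.injective (by simpa using h))
  have : n * toAdd x = m * toAdd x := by
    simpa [toAdd_zpow, smul_eq_mul] using congrArg toAdd hnm
  exact mul_right_cancel₀ hx' this

/-- An element whose integer powers are pairwise distinct generates a copy of `ℤ`. -/
lemma zpowers_equiv {G : Type*} [Group G] (g : G)
    (hg : Function.Injective fun n : ℤ => g ^ n) :
    Nonempty (Subgroup.zpowers g ≃* Multiplicative ℤ) := by
  have hinj : Function.Injective (zpowersHom G g) := by
    intro x y hxy
    have : toAdd x = toAdd y := hg (by simpa [zpowersHom_apply] using hxy)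
    exact toAdd.injective this
  have hrange : Subgroup.zpowers g = (zpowersHom G g).range := by
    ext x
    simp only [MonoidHom.mem_range, Subgroup.mem_zpowers_iff, zpowersHom_apply]
    exact ⟨fun ⟨k, hk⟩ => ⟨ofAdd k, by simpa using hk⟩, fun ⟨y, hy⟩ => ⟨toAdd y, hy⟩⟩
  exact ⟨(MulEquiv.subgroupCongr hrange).trans (MonoidHom.ofInjective hinj).symm⟩

lemma comm_of_equiv {G H : Type*} [Group G] [CommGroup H] (A : Subgroup G) (e : A ≃* H) :
    IsMulCommutative A :=
  ⟨⟨fun a b => e.injective (by rw [map_mul, map_mul, mul_comm])⟩⟩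

lemma kba_apply (r n : Multiplicative ℤ) :
    kleinBottleAction r n = if Even (toAdd r) then n else n⁻¹ := by
  have h2 : (MulEquiv.inv (Multiplicative ℤ)) ^ (2:ℤ) = 1 := by
    have : ((2:ℤ)) = ((2:ℕ):ℤ) := rfl
    rw [this, zpow_natCast]
    ext x; simp [pow_succ]
  have key : ∀ k : ℤ, (MulEquiv.inv (Multiplicative ℤ)) ^ k
      = if Even k then 1 else MulEquiv.inv (Multiplicative ℤ) := by
    intro k
    rcases Int.even_or_odd k with ⟨m, hm⟩ | ⟨m, hm⟩
    · have : k = 2 * m := by omega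
      rw [if_pos ⟨m, hm⟩, this, zpow_mul, h2, one_zpow]
    · have : k = 2 * m + 1 := by omega
      rw [if_neg (by simp [hm, parity_simps]), this, zpow_add, zpow_mul, h2, one_zpow,
        one_mul, zpow_one]
  have : kleinBottleAction r = (MulEquiv.inv (Multiplicative ℤ)) ^ (toAdd r) := by
    simp [kleinBottleAction, zpowersHom_apply]
  rw [this, key]
  split <;> simp

lemma conj_inl (k : KleinBottleGroup) (c : Multiplicative ℤ) :
    k * inl c * k⁻¹ = inl (kleinBottleAction (rightHom k) c) := by
  have h1 : (inr (rightHom k) : KleinBottleGroup) * inl c * (inr (rightHom k))⁻¹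
      = inl (kleinBottleAction (rightHom k) c) := by
    rw [← map_inv, ← inl_aut]
  have hk : rightHom k = k.right := by simp [rightHom]
  calc k * inl c * k⁻¹
      = inl k.left * ((inr k.right : KleinBottleGroup) * inl c * (inr k.right)⁻¹)
        * (inl k.left)⁻¹ := by
        conv_lhs => rw [← inl_left_mul_inr_right k]
        group
    _ = inl (k.left * kleinBottleAction (rightHom k) c * k.left⁻¹) := by
        rw [hk] at h1
        rw [h1, ← map_inv, ← map_mul, ← map_mul, hk]
    _ = inl (kleinBottleAction (rightHom k) c) := by
        rw [mul_comm k.left, mul_assoc, mul_inv_cancel, mul_one]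

lemma fix_zpow {G : Type*} [Group G] (τ : MulAut G) {g : G} (hτ : τ g = g) :
    ∀ m : ℤ, (τ ^ m) g = g := by
  intro m
  induction m using Int.induction_on with
  | zero => simp
  | succ i ih => rw [zpow_add, zpow_one, MulAut.mul_apply, hτ, ih]
  | pred i ih =>
      have h' : τ⁻¹ g = g := by
        conv_lhs => rw [← hτ]
        simp
      rw [sub_eq_add_neg, zpow_add, MulAut.mul_apply]
      simpa [h'] using ih

lemma conj_zpow_eq {G : Type*} [Group G] {h g : G} (hc : h * g * h⁻¹ = g⁻¹) (k : ℤ) :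
    h ^ k * g * (h ^ k)⁻¹ = if Even k then g else g⁻¹ := by
  have hσ : (MulAut.conj h) g = g⁻¹ := by simpa [MulAut.conj_apply] using hc
  have h2 : ((MulAut.conj h) ^ (2:ℤ)) g = g := by
    have : ((2:ℤ)) = ((2:ℕ):ℤ) := rfl
    rw [this, zpow_natCast, pow_succ, pow_one, MulAut.mul_apply, hσ, map_inv, hσ, inv_inv]
  have key : ∀ m : ℤ, ((MulAut.conj h) ^ m) g = if Even m then g else g⁻¹ := by
    intro m
    rcases Int.even_or_odd m with ⟨j, hj⟩ | ⟨j, hj⟩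
    · have hm : m = 2 * j := by omega
      rw [if_pos ⟨j, hj⟩, hm, zpow_mul]
      exact fix_zpow _ h2 j
    · have hm : m = 2 * j + 1 := by omega
      rw [if_neg (by simp [hj, parity_simps]), hm, zpow_add, zpow_one, MulAut.mul_apply, hσ,
        map_inv, zpow_mul]
      rw [fix_zpow _ h2 j]
  have := key k
  rwa [← map_zpow (MulAut.conj : G →* MulAut G), MulAut.conj_apply] at this

lemma even_case (H : Subgroup KleinBottleGroup) (g h : KleinBottleGroup)
    (hg : g ∈ H) (hh : h ∈ H)
    (hπg : rightHom g = 1) (hπh : toAdd (rightHom h) ≠ 0)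
    (hinj : Function.Injective fun n : ℤ => g ^ n)
    (hcomm : Commute g h)
    (hnf : ∀ x ∈ H, ∃ s t : ℤ, x = g ^ s * h ^ t) :
    Nonempty (H ≃* Multiplicative ℤ × Multiplicative ℤ) := by
  set φ := (zpowersHom _ g).noncommCoprod (zpowersHom _ h)
    (fun m n => by simpa [zpowersHom_apply] using hcomm.zpow_zpow (toAdd m) (toAdd n)) with hφ
  have hφapp : ∀ p : Multiplicative ℤ × Multiplicative ℤ,
      φ p = g ^ toAdd p.1 * h ^ toAdd p.2 := by
    intro p; simp [hφ, MonoidHom.noncommCoprod_apply, zpowersHom_apply]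
  have hφinj : Function.Injective φ := by
    rw [← MonoidHom.ker_eq_bot_iff, eq_bot_iff]
    rintro ⟨y, x⟩ hyx
    have h1 : g ^ toAdd y * h ^ toAdd x = 1 := by
      rw [← hφapp (y, x)]; exact hyx
    have h2 : rightHom h ^ toAdd x = (1 : Multiplicative ℤ) := by
      have := congrArg rightHom h1
      simpa [map_mul, map_zpow, hπg] using this
    have hx : toAdd x = 0 := by
      have := congrArg toAdd h2
      simp only [toAdd_zpow, toAdd_one, smul_eq_mul, mul_eq_zero] at this
      tauto
    have hx1 : x = 1 := toAdd.injective hx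
    have hy : toAdd y = 0 := by
      apply hinj
      show g ^ toAdd y = g ^ (0 : ℤ)
      rw [zpow_zero]
      simpa [hx1] using h1
    have hy1 : y = 1 := toAdd.injective hy
    simp [Subgroup.mem_bot, Prod.ext_iff, hx1, hy1]
  have hrange : φ.range = H := by
    apply le_antisymm
    · rintro _ ⟨⟨y, x⟩, rfl⟩
      rw [hφapp (y, x)]
      exact mul_mem (zpow_mem hg _) (zpow_mem hh _)
    · intro x hx
      obtain ⟨s, t, rfl⟩ := hnf x hx
      exact ⟨(ofAdd s, ofAdd t), by simp [hφapp]⟩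
  exact ⟨(MulEquiv.subgroupCongr hrange.symm).trans (MonoidHom.ofInjective hφinj).symm⟩

lemma odd_case (H : Subgroup KleinBottleGroup) (g h : KleinBottleGroup)
    (hg : g ∈ H) (hh : h ∈ H)
    (hπg : rightHom g = 1) (hπh : toAdd (rightHom h) ≠ 0)
    (hinj : Function.Injective fun n : ℤ => g ^ n)
    (hconj : h * g * h⁻¹ = g⁻¹)
    (hnf : ∀ x ∈ H, ∃ s t : ℤ, x = g ^ s * h ^ t) :
    Nonempty (H ≃* KleinBottleGroup) := by
  have compat : ∀ r : Multiplicative ℤ,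
      (zpowersHom KleinBottleGroup g).comp (kleinBottleAction r).toMonoidHom
        = (MulAut.conj ((zpowersHom KleinBottleGroup h) r)).toMonoidHom.comp
            (zpowersHom KleinBottleGroup g) := by
    intro r
    apply MonoidHom.ext_mint
    have hcz := conj_zpow_eq hconj (toAdd r)
    simp only [MonoidHom.comp_apply, MulEquiv.coe_toMonoidHom, MulAut.conj_apply,
      zpowersHom_apply, kba_apply, toAdd_ofAdd, zpow_one]
    rw [hcz]
    split <;> simp
  set φ := SemidirectProduct.lift (zpowersHom _ g) (zpowersHom _ h) compat with hφ
  have hφapp : ∀ p : KleinBottleGroup, φ p = g ^ toAdd p.left * h ^ toAdd p.right := by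
    intro p
    conv_lhs => rw [← inl_left_mul_inr_right p]
    rw [map_mul, lift_inl, lift_inr, zpowersHom_apply, zpowersHom_apply]
  have hφinj : Function.Injective φ := by
    rw [← MonoidHom.ker_eq_bot_iff, eq_bot_iff]
    intro p hp
    have h1 : g ^ toAdd p.left * h ^ toAdd p.right = 1 := by
      rw [← hφapp p]; exact hp
    have h2 : rightHom h ^ toAdd p.right = (1 : Multiplicative ℤ) := by
      have := congrArg rightHom h1
      simpa [map_mul, map_zpow, hπg] using this
    have hx : toAdd p.right = 0 := by
      have := congrArg toAdd h2
      simp only [toAdd_zpow, toAdd_one, smul_eq_mul, mul_eq_zero] at this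
      tauto
    have hx1 : p.right = 1 := toAdd.injective hx
    have hy : toAdd p.left = 0 := by
      apply hinj
      show g ^ toAdd p.left = g ^ (0 : ℤ)
      rw [zpow_zero]
      simpa [hx1] using h1
    have hy1 : p.left = 1 := toAdd.injective hy
    have : p = 1 := by
      cases p
      simp_all [SemidirectProduct.ext_iff]
    simp [this, Subgroup.mem_bot]
  have hrange : φ.range = H := by
    apply le_antisymm
    · rintro _ ⟨p, rfl⟩
      rw [hφapp p]
      exact mul_mem (zpow_mem hg _) (zpow_mem hh _)
    · intro x hx
      obtain ⟨s, t, rfl⟩ := hnf x hx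
      refine ⟨⟨ofAdd s, ofAdd t⟩, ?_⟩
      rw [hφapp ⟨ofAdd s, ofAdd t⟩]
      simp
  exact ⟨(MulEquiv.subgroupCongr hrange.symm).trans (MonoidHom.ofInjective hφinj).symm⟩

lemma inl_zpow_injective {c : Multiplicative ℤ} (hc : c ≠ 1) :
    Function.Injective fun n : ℤ => (inl c : KleinBottleGroup) ^ n := by
  intro n m hnm
  apply multZ_zpow_injective hc
  apply inl_injective (φ := kleinBottleAction)
  simpa [map_zpow] using hnm

lemma part1 (H : Subgroup KleinBottleGroup) :
    H = ⊥ ∨ Nonempty (H ≃* Multiplicative ℤ) ∨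
      Nonempty (H ≃* Multiplicative ℤ × Multiplicative ℤ) ∨
      Nonempty (H ≃* KleinBottleGroup) := by
  obtain ⟨c, hc⟩ := multZ_subgroup (H.comap (inl : _ →* KleinBottleGroup))
  obtain ⟨a, ha⟩ := multZ_subgroup (H.map (rightHom : KleinBottleGroup →* _))
  have hmemN : ∀ d : Multiplicative ℤ, (inl d : KleinBottleGroup) ∈ H ↔ d ∈ zpowers c := by
    intro d; rw [← hc]; exact Iff.rfl
  have hkerrange : ∀ x : KleinBottleGroup, rightHom x = 1 → ∃ d, (inl d : KleinBottleGroup) = x := by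
    intro x hx
    have hrk := range_inl_eq_ker_rightHom (φ := kleinBottleAction)
    have : x ∈ (inl : _ →* KleinBottleGroup).range := by
      rw [hrk]; exact hx
    exact this
  by_cases hA : a = 1
  · -- the projection of H is trivial
    have hH : H = zpowers (inl c : KleinBottleGroup) := by
      apply le_antisymm
      · intro x hx
        have hπx : rightHom x ∈ H.map rightHom := Subgroup.mem_map_of_mem _ hx
        rw [ha, hA] at hπx
        obtain ⟨k, hk⟩ := Subgroup.mem_zpowers_iff.mp hπx
        have hx1 : rightHom x = 1 := by rw [← hk, one_zpow]
        obtain ⟨d, hd⟩ := hkerrange x hx1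
        have hdz : d ∈ zpowers c := (hmemN d).mp (hd ▸ hx)
        obtain ⟨s, hs⟩ := Subgroup.mem_zpowers_iff.mp hdz
        exact Subgroup.mem_zpowers_iff.mpr ⟨s, by rw [← map_zpow, hs, hd]⟩
      · rw [Subgroup.zpowers_le]
        exact (hmemN c).mpr (Subgroup.mem_zpowers c)
    by_cases hC : c = 1
    · left
      rw [hH, hC]
      simpa using Subgroup.zpowers_one_eq_bot
    · right; left
      rw [hH]
      exact zpowers_equiv _ (inl_zpow_injective hC)
  · -- the projection of H is infinite cyclic, generated by a = rightHom h
    have haH : a ∈ H.map rightHom := by rw [ha]; exact Subgroup.mem_zpowers a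
    obtain ⟨h, hhH, hπh⟩ := haH
    have hnf : ∀ x ∈ H, ∃ s t : ℤ, x = (inl c : KleinBottleGroup) ^ s * h ^ t := by
      intro x hx
      have hπx : rightHom x ∈ Subgroup.zpowers a := by
        rw [← ha]; exact Subgroup.mem_map_of_mem _ hx
      obtain ⟨t, ht⟩ := Subgroup.mem_zpowers_iff.mp hπx
      have hy : x * (h ^ t)⁻¹ ∈ H := mul_mem hx (inv_mem (zpow_mem hhH t))
      have hπy : rightHom (x * (h ^ t)⁻¹) = 1 := by
        rw [map_mul, map_inv, map_zpow, hπh, ht, mul_inv_cancel]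
      obtain ⟨d, hd⟩ := hkerrange _ hπy
      have hdz : d ∈ zpowers c := (hmemN d).mp (hd ▸ hy)
      obtain ⟨s, hs⟩ := Subgroup.mem_zpowers_iff.mp hdz
      refine ⟨s, t, ?_⟩
      have : inl d = x * (h ^ t)⁻¹ := hd
      rw [← map_zpow, hs, this]
      group
    have hπh' : toAdd (rightHom h) ≠ 0 := by
      rw [hπh]
      exact fun h0 => hA (toAdd.injective (by simpa using h0))
    by_cases hC : c = 1
    · -- H is infinite cyclic generated by h
      right; left
      have hH : H = zpowers h := by
        apply le_antisymm
        · intro x hx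
          obtain ⟨s, t, rfl⟩ := hnf x hx
          rw [hC]
          simpa using Subgroup.mem_zpowers_iff.mpr ⟨t, rfl⟩
        · rw [Subgroup.zpowers_le]; exact hhH
      rw [hH]
      apply zpowers_equiv
      intro n m hnm
      apply multZ_zpow_injective hA
      show a ^ n = a ^ m
      rw [← hπh, ← map_zpow, ← map_zpow]
      exact congrArg rightHom hnm
    · set g : KleinBottleGroup := inl c with hgdef
      have hgH : g ∈ H := (hmemN c).mpr (Subgroup.mem_zpowers c)
      have hπg : rightHom g = 1 := rightHom_inl c
      have hinj := inl_zpow_injective hC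
      have hconj0 : h * g * h⁻¹ = inl (kleinBottleAction a c) := by
        rw [hgdef, conj_inl, hπh]
      by_cases hE : Even (toAdd a)
      · right; right; left
        have hconj : h * g * h⁻¹ = g := by
          rw [hconj0, kba_apply, if_pos hE]
        have hcomm : Commute g h := by
          have : h * g = g * h := by
            calc h * g = h * g * h⁻¹ * h := by group
              _ = g * h := by rw [hconj]
          exact this.symm
        exact even_case H g h hgH hhH hπg hπh' hinj hcomm hnf
      · right; right; right
        have hconj : h * g * h⁻¹ = g⁻¹ := by
          rw [hconj0, kba_apply, if_neg hE, hgdef, map_inv]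
        exact odd_case H g h hgH hhH hπg hπh' hinj hconj hnf

lemma E_lemma : ∃ E : Subgroup KleinBottleGroup, E.index = 2 ∧
    Nonempty (E ≃* Multiplicative ℤ × Multiplicative ℤ) := by
  set f : KleinBottleGroup →* Multiplicative (ZMod 2) :=
    (AddMonoidHom.toMultiplicative (Int.castAddHom (ZMod 2))).comp
      (rightHom : KleinBottleGroup →* Multiplicative ℤ) with hf
  have hfapp : ∀ x : KleinBottleGroup,
      f x = ofAdd ((toAdd (rightHom x) : ℤ) : ZMod 2) := fun x => rfl
  have hfsurj : Function.Surjective f := by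
    intro z
    obtain ⟨n, hn⟩ := ZMod.intCast_surjective (toAdd z)
    refine ⟨inr (ofAdd n), ?_⟩
    rw [hfapp]
    apply toAdd.injective
    simpa using hn
  have hmem : ∀ x : KleinBottleGroup, x ∈ f.ker ↔ (2:ℤ) ∣ toAdd (rightHom x) := by
    intro x
    rw [MonoidHom.mem_ker, hfapp]
    constructor
    · intro hx
      have h0 : ((toAdd (rightHom x) : ℤ) : ZMod 2) = 0 := by
        have := congrArg toAdd hx; simpa using this
      have := (ZMod.intCast_zmod_eq_zero_iff_dvd _ 2).mp h0
      exact_mod_cast this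
    · intro hx
      have h0 : ((toAdd (rightHom x) : ℤ) : ZMod 2) = 0 :=
        (ZMod.intCast_zmod_eq_zero_iff_dvd _ 2).mpr (by exact_mod_cast hx)
      rw [h0]; rfl
  refine ⟨f.ker, ?_, ?_⟩
  · rw [Subgroup.index_ker, MonoidHom.range_eq_top.mpr hfsurj]
    rw [Subgroup.card_top, Nat.card_congr (Multiplicative.toAdd (α := ZMod 2)), Nat.card_zmod]
  · set g : KleinBottleGroup := inl (ofAdd 1) with hgdef
    set h : KleinBottleGroup := inr (ofAdd 2) with hhdef
    have hone : (ofAdd (1:ℤ)) ≠ (1 : Multiplicative ℤ) := by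
      intro h1
      have h2 := congrArg toAdd h1
      simp only [toAdd_ofAdd, toAdd_one] at h2
      exact one_ne_zero h2
    have hπh : rightHom h = ofAdd 2 := rightHom_inr _
    refine even_case f.ker g h ?_ ?_ (rightHom_inl _) (by rw [hπh, toAdd_ofAdd]; norm_num) 
      (inl_zpow_injective hone) ?_ ?_
    · rw [hmem, rightHom_inl]; simp
    · rw [hmem, hπh]; simp
    · have hconj : h * g * h⁻¹ = g := by
        rw [hgdef, conj_inl, hπh, kba_apply, if_pos (by simp : Even (toAdd (ofAdd (2:ℤ))))]
      have : h * g = g * h := by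
        calc h * g = h * g * h⁻¹ * h := by group
          _ = g * h := by rw [hconj]
      exact this.symm
    · intro x hx
      obtain ⟨t, ht⟩ := (hmem x).mp hx
      refine ⟨toAdd x.left, t, ?_⟩
      have hrx : rightHom x = x.right := by simp [rightHom]
      conv_lhs => rw [← inl_left_mul_inr_right x]
      congr 1
      · rw [hgdef, ← map_zpow]
        congr 1
        apply toAdd.injective
        simp [toAdd_zpow]
      · rw [hhdef, ← map_zpow]
        congr 1
        apply toAdd.injective
        rw [hrx] at ht
        simp [toAdd_zpow]
        omega

lemma bot_isCommutative {G : Type*} [Group G] : IsMulCommutative (⊥ : Subgroup G) :=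
  ⟨⟨fun a b => Subtype.ext (by
    simp [Subgroup.mem_bot.mp a.2, Subgroup.mem_bot.mp b.2])⟩⟩

lemma part2 (H : Subgroup KleinBottleGroup) : ∃ A : Subgroup H,
    A.index ≤ 2 ∧ IsMulCommutative A ∧
    (A = ⊥ ∨ Nonempty (A ≃* Multiplicative ℤ) ∨
      Nonempty (A ≃* Multiplicative ℤ × Multiplicative ℤ)) := by
  rcases part1 H with hbot | he | he | he
  · refine ⟨⊥, ?_, bot_isCommutative, Or.inl rfl⟩
    subst hbot
    rw [Subgroup.index_bot, Subgroup.card_bot]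
    omega
  · obtain ⟨e⟩ := he
    exact ⟨⊤, by simp [Subgroup.index_top], comm_of_equiv _ (Subgroup.topEquiv.trans e),
      Or.inr (Or.inl ⟨Subgroup.topEquiv.trans e⟩)⟩
  · obtain ⟨e⟩ := he
    exact ⟨⊤, by simp [Subgroup.index_top], comm_of_equiv _ (Subgroup.topEquiv.trans e),
      Or.inr (Or.inr ⟨Subgroup.topEquiv.trans e⟩)⟩
  · obtain ⟨e⟩ := he
    obtain ⟨E, hEi, ⟨eE⟩⟩ := E_lemma
    have hmap : (E.comap (e : H →* KleinBottleGroup)).map (e : H →* KleinBottleGroup) = E :=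
      Subgroup.map_comap_eq_self_of_surjective e.surjective E
    have eq1 : (E.comap (e : H →* KleinBottleGroup)) ≃* E :=
      (e.subgroupMap _).trans (MulEquiv.subgroupCongr hmap)
    refine ⟨E.comap (e : H →* KleinBottleGroup), ?_, comm_of_equiv _ (eq1.trans eE),
      Or.inr (Or.inr ⟨eq1.trans eE⟩)⟩
    rw [Subgroup.index_comap_of_surjective E e.surjective, hEi]

/-- Every subgroup of the Klein bottle group is trivial, infinite cyclic,
isomorphic to `ℤ × ℤ`, or isomorphic to the Klein bottle group itself.
In particular, every subgroup contains an abelian subgroup of index at most 2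
which is trivial, infinite cyclic, or isomorphic to `ℤ × ℤ`. -/
theorem kleinBottleGroup_subgroup_classification :
    (∀ H : Subgroup KleinBottleGroup,
      H = ⊥ ∨ Nonempty (H ≃* Multiplicative ℤ) ∨
        Nonempty (H ≃* Multiplicative ℤ × Multiplicative ℤ) ∨
        Nonempty (H ≃* KleinBottleGroup)) ∧
    (∀ H : Subgroup KleinBottleGroup, ∃ A : Subgroup H,
      A.index ≤ 2 ∧ IsMulCommutative A ∧
      (A = ⊥ ∨ Nonempty (A ≃* Multiplicative ℤ) ∨
        Nonempty (A ≃* Multiplicative ℤ × Multiplicative ℤ))) := by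
  exact ⟨part1, part2⟩
end

section
/- Fix real numbers λ and x with −π/2 < x < π/2. Let f, g : ℝ → ℝ be differentiable with f′(t) = cos²x + sin²x · sin²(f(t)) and g′(t) = λ sin x · cos²(f(t)) for all t ∈ ℝ, and with f(0) = −π/2 and g(0) = 0. Then g(π / cos x) = λπ(tan x − tan(x/2)). -/
open Real



private lemma D1_pos {c : ℝ} (hc : 0 < c) (hc1 : c ≤ 1) (u : ℝ) :
    0 < c + (1 - c) * sin u ^ 2 := by nlinarith [sq_nonneg (sin u)]

private lemma D2_pos {c : ℝ} (hc : 0 < c) (hc1 : c ≤ 1) (u : ℝ) :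
    0 < c ^ 2 + (1 - c ^ 2) * sin u ^ 2 := by
  have h1 : 0 ≤ (1 - c ^ 2) * sin u ^ 2 := by
    apply mul_nonneg _ (sq_nonneg _)
    nlinarith
  nlinarith [pow_pos hc 2]

private noncomputable def Acor (c u : ℝ) : ℝ :=
  arctan ((1 - c) * sin u * cos u / (c + (1 - c) * sin u ^ 2))

private lemma Acor_eq_zero_of_sin {c u : ℝ} (h : sin u = 0) : Acor c u = 0 := by
  simp [Acor, h]

private lemma Acor_eq_zero_of_cos {c u : ℝ} (h : cos u = 0) : Acor c u = 0 := by
  simp [Acor, h]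

private lemma one_add_sq {c : ℝ} (hc : 0 < c) (hc1 : c ≤ 1) (u : ℝ) :
    1 + ((1 - c) * sin u * cos u / (c + (1 - c) * sin u ^ 2)) ^ 2
      = (c ^ 2 + (1 - c ^ 2) * sin u ^ 2) / (c + (1 - c) * sin u ^ 2) ^ 2 := by
  have hD1 := D1_pos hc hc1 u
  have hq : cos u ^ 2 = 1 - sin u ^ 2 := cos_sq' u
  rw [div_pow]
  field_simp
  linear_combination ((1 - c) ^ 2 * sin u ^ 2) * hq

private lemma cos_sq_add_Acor {c : ℝ} (hc : 0 < c) (hc1 : c ≤ 1) (u : ℝ) :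
    cos (u + Acor c u) ^ 2
      = c ^ 2 * cos u ^ 2 / (c ^ 2 + (1 - c ^ 2) * sin u ^ 2) := by
  have hD1 := D1_pos hc hc1 u
  have hD2 := D2_pos hc hc1 u
  have h1 : cos (u + Acor c u)
      = (cos u - sin u * ((1 - c) * sin u * cos u / (c + (1 - c) * sin u ^ 2)))
        / Real.sqrt (1 + ((1 - c) * sin u * cos u / (c + (1 - c) * sin u ^ 2)) ^ 2) := by
    rw [Acor, cos_add, cos_arctan, sin_arctan]
    ring
  rw [h1, div_pow, sq_sqrt (by positivity), one_add_sq hc hc1 u]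
  have h2 : cos u - sin u * ((1 - c) * sin u * cos u / (c + (1 - c) * sin u ^ 2))
      = c * cos u / (c + (1 - c) * sin u ^ 2) := by
    have hD1' : c + sin u ^ 2 * (1 - c) ≠ 0 := by rw [mul_comm]; exact hD1.ne'
    field_simp
    ring
  rw [h2]
  field_simp

private lemma hasDerivAt_Acor {c : ℝ} (hc : 0 < c) (hc1 : c ≤ 1) (u : ℝ) :
    HasDerivAt (Acor c) (c / (c ^ 2 + (1 - c ^ 2) * sin u ^ 2) - 1) u := by
  have hD1 := D1_pos hc hc1 u
  have hD2 := D2_pos hc hc1 u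
  have hq : cos u ^ 2 = 1 - sin u ^ 2 := cos_sq' u
  have hN : HasDerivAt (fun u => (1 - c) * sin u * cos u)
      ((1 - c) * (cos u ^ 2 - sin u ^ 2)) u := by
    have := ((hasDerivAt_sin u).const_mul (1 - c)).mul (hasDerivAt_cos u)
    refine this.congr_deriv ?_
    ring
  have hD : HasDerivAt (fun u => c + (1 - c) * sin u ^ 2)
      ((1 - c) * (2 * sin u * cos u)) u := by
    have := (((hasDerivAt_sin u).pow 2).const_mul (1 - c)).const_add c
    refine this.congr_deriv ?_
    ring
  have hr : HasDerivAt (fun u => (1 - c) * sin u * cos u / (c + (1 - c) * sin u ^ 2))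
      ((c - (c ^ 2 + (1 - c ^ 2) * sin u ^ 2)) / (c + (1 - c) * sin u ^ 2) ^ 2) u := by
    refine (hN.div hD hD1.ne').congr_deriv (Eq.symm ?_)
    rw [div_eq_div_iff (by positivity) (by positivity)]
    linear_combination (-(1 - c) * (c - (1 - c) * sin u ^ 2) *
      (c + (1 - c) * sin u ^ 2) ^ 2) * hq
  have hA := hr.arctan
  rw [show Acor c = fun u => arctan ((1 - c) * sin u * cos u / (c + (1 - c) * sin u ^ 2))
    from rfl]
  refine hA.congr_deriv (Eq.symm ?_)
  rw [one_add_sq hc hc1 u]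
  have hD1' : c + sin u ^ 2 * (1 - c) ≠ 0 := by rw [mul_comm]; exact hD1.ne'
  field_simp

private lemma hasDerivAt_f0 {c : ℝ} (hc : 0 < c) (hc1 : c ≤ 1) (t : ℝ) :
    HasDerivAt (fun t => -(π/2) + c * t + Acor c (c * t))
      (c ^ 2 + (1 - c ^ 2) * sin (-(π/2) + c * t + Acor c (c * t)) ^ 2) t := by
  have h1 : HasDerivAt (fun t : ℝ => c * t) c t := by
    simpa using (hasDerivAt_id t).const_mul c
  have h2 := (hasDerivAt_Acor hc hc1 (c * t)).comp t h1
  have h3 : HasDerivAt (fun t => -(π/2) + c * t + Acor c (c * t))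
      (c + (c / (c ^ 2 + (1 - c ^ 2) * sin (c * t) ^ 2) - 1) * c) t := by
    exact (h1.const_add (-(π/2))).add h2
  convert h3 using 1
  have hsin : sin (-(π/2) + c * t + Acor c (c * t)) ^ 2
      = cos (c * t + Acor c (c * t)) ^ 2 := by
    rw [show -(π/2) + c * t + Acor c (c * t) = (c * t + Acor c (c * t)) - π/2 by ring,
        sin_sub_pi_div_two]
    ring
  rw [hsin, cos_sq_add_Acor hc hc1 (c * t)]
  have hD2 := D2_pos hc hc1 (c * t)
  have hq : cos (c * t) ^ 2 = 1 - sin (c * t) ^ 2 := cos_sq' (c * t)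
  field_simp
  linear_combination (c - c ^ 3) * hq


/-- For `−π/2 < x < π/2`, along the solution of `z′ = cos²x + sin²x · sin²z`,
`y′ = λ sin x · cos²z` starting at `z = −π/2`, `y = 0` at time `0`, the total
`y`-displacement at the crossing time `π / cos x` is `λπ(tan x − tan(x/2))`. -/
theorem crossing_displacement (l x : ℝ) (hx : x ∈ Set.Ioo (-(π/2)) (π/2))
    (f g : ℝ → ℝ)
    (hf : ∀ t : ℝ, HasDerivAt f (cos x ^ 2 + sin x ^ 2 * sin (f t) ^ 2) t)
    (hg : ∀ t : ℝ, HasDerivAt g (l * sin x * cos (f t) ^ 2) t)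
    (hf0 : f 0 = -(π/2)) (hg0 : g 0 = 0) :
    g (π / cos x) = l * π * (tan x - tan (x/2)) := by
  obtain ⟨hx1, hx2⟩ := hx
  have hpi := pi_pos
  have hc : 0 < cos x := cos_pos_of_mem_Ioo ⟨hx1, hx2⟩
  have hc1 : cos x ≤ 1 := cos_le_one x
  by_cases hs : sin x = 0
  · have hx0 : x = 0 := by
      rw [sin_eq_zero_iff_of_lt_of_lt (by linarith) (by linarith)] at hs
      exact hs
    subst hx0
    have hgc : ∀ t, deriv g t = 0 := by
      intro t
      have := hg t
      simp only [sin_zero, mul_zero, zero_mul] at this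
      exact this.deriv
    have hconst : g (π / cos 0) = g 0 :=
      is_const_of_deriv_eq_zero (fun t => by
        have := hg t
        simp only [sin_zero, mul_zero, zero_mul] at this
        exact this.differentiableAt) hgc _ _
    simp only [cos_zero, div_one] at hconst
    simp [hconst, hg0]
  · -- main case : sin x ≠ 0
    have hs2 : sin x ^ 2 = 1 - cos x ^ 2 := sin_sq x
    set c := cos x with hcdef
    -- the explicit solution f₀
    set f₀ : ℝ → ℝ := fun t => -(π/2) + c * t + Acor c (c * t) with hf0def
    have hf₀' : ∀ t, HasDerivAt f₀ (c ^ 2 + (1 - c ^ 2) * sin (f₀ t) ^ 2) t :=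
      fun t => hasDerivAt_f0 hc hc1 t
    -- rewrite f's derivative
    have hf' : ∀ t, HasDerivAt f (c ^ 2 + (1 - c ^ 2) * sin (f t) ^ 2) t := by
      intro t
      have := hf t
      rwa [hs2] at this
    -- uniqueness of ODE solutions
    have hlip : ∀ t : ℝ, LipschitzWith 1 (fun z : ℝ => c ^ 2 + (1 - c ^ 2) * sin z ^ 2) := by
      intro _
      apply lipschitzWith_of_nnnorm_deriv_le
      · intro z
        exact ((((hasDerivAt_sin z).pow 2).const_mul (1 - c ^ 2)).const_add
          (c ^ 2)).differentiableAt
      · intro z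
        have hd : deriv (fun z : ℝ => c ^ 2 + (1 - c ^ 2) * sin z ^ 2) z
            = (1 - c ^ 2) * (2 * sin z ^ 1 * cos z) :=
          ((((hasDerivAt_sin z).pow 2).const_mul (1 - c ^ 2)).const_add (c ^ 2)).deriv
        rw [hd]
        have hb : |(1 - c ^ 2) * (2 * sin z ^ 1 * cos z)| ≤ 1 := by
          rw [abs_mul]
          have h1 : |1 - c ^ 2| ≤ 1 := by
            rw [abs_le]
            constructor <;> nlinarith
          have h2 : |2 * sin z ^ 1 * cos z| ≤ 1 := by
            rw [show (2 : ℝ) * sin z ^ 1 * cos z = sin (2 * z) by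
              rw [sin_two_mul]; ring]
            exact abs_sin_le_one _
          calc |1 - c ^ 2| * |2 * sin z ^ 1 * cos z| ≤ 1 * 1 :=
                mul_le_mul h1 h2 (abs_nonneg _) (by norm_num)
            _ = 1 := by norm_num
        rw [← NNReal.coe_le_coe, coe_nnnorm, NNReal.coe_one, Real.norm_eq_abs]
        exact hb
    have hT : (0:ℝ) ≤ π / c := by positivity
    have heqOn : Set.EqOn f f₀ (Set.Icc 0 (π / c)) := by
      apply ODE_solution_unique (v := fun _ z => c ^ 2 + (1 - c ^ 2) * sin z ^ 2) hlip
      · exact fun t _ => (hf' t).continuousAt.continuousWithinAt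
      · exact fun t _ => (hf' t).hasDerivWithinAt
      · exact fun t _ => (hf₀' t).continuousAt.continuousWithinAt
      · exact fun t _ => (hf₀' t).hasDerivWithinAt
      · rw [hf0, hf0def]
        simp [Acor_eq_zero_of_sin, sin_zero]
    have hfT : f (π / c) = π / 2 := by
      have h1 := heqOn (Set.right_mem_Icc.mpr hT)
      rw [h1, hf0def]
      simp only
      rw [mul_div_cancel₀ _ hc.ne', Acor_eq_zero_of_sin sin_pi]
      ring
    -- the antiderivative H along the flow
    set A : ℝ → ℝ := Acor c with hAdef
    set H : ℝ → ℝ := fun z => l / sin x * ((z + A z) / c - z) with hHdef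
    have hHf : ∀ t, HasDerivAt (fun t => H (f t)) (l * sin x * cos (f t) ^ 2) t := by
      intro t
      have hAz := hasDerivAt_Acor hc hc1 (f t)
      have hD2 := D2_pos hc hc1 (f t)
      have hq : cos (f t) ^ 2 = 1 - sin (f t) ^ 2 := cos_sq' (f t)
      have h1 : HasDerivAt H
          (l / sin x * ((1 + (c / (c ^ 2 + (1 - c ^ 2) * sin (f t) ^ 2) - 1)) / c - 1))
          (f t) := by
        apply HasDerivAt.const_mul
        exact (((hasDerivAt_id (f t)).add hAz).div_const c).sub (hasDerivAt_id (f t))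
      have h1' : HasDerivAt H
          (l / sin x * (1 / (c ^ 2 + (1 - c ^ 2) * sin (f t) ^ 2) - 1)) (f t) := by
        convert h1 using 2
        field_simp
        ring
      have h2 := h1'.comp t (hf' t)
      refine h2.congr_deriv ?_
      have e3 : l / sin x * (1 / (c ^ 2 + (1 - c ^ 2) * sin (f t) ^ 2) - 1)
            * (c ^ 2 + (1 - c ^ 2) * sin (f t) ^ 2)
          = l / sin x * (sin x ^ 2 * cos (f t) ^ 2) := by
        rw [hs2, hq]
        field_simp
        ring
      rw [e3]
      field_simp
    have hconst : g (π / c) - H (f (π / c)) = g 0 - H (f 0) :=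
      is_const_of_deriv_eq_zero (f := fun t => g t - H (f t))
        (fun t => ((hg t).sub (hHf t)).differentiableAt)
        (fun t => (((hg t).sub (hHf t)).deriv).trans (sub_self _)) (π / c) 0
    rw [hfT, hf0, hg0] at hconst
    have hA1 : A (π / 2) = 0 := Acor_eq_zero_of_cos cos_pi_div_two
    have hA2 : A (-(π / 2)) = 0 := by
      apply Acor_eq_zero_of_cos
      rw [cos_neg, cos_pi_div_two]
    have hgT : g (π / c) = l / sin x * (π / c - π) := by
      have h3 : g (π / c) = H (π / 2) - H (-(π / 2)) := by linarith [hconst]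
      rw [h3]
      simp only [hHdef, hA1, hA2]
      field_simp
      ring
    have hch : 0 < cos (x / 2) := cos_pos_of_mem_Ioo ⟨by linarith, by linarith⟩
    have h2s : sin x = 2 * sin (x / 2) * cos (x / 2) := by
      have := sin_two_mul (x / 2)
      rwa [show 2 * (x / 2) = x by ring] at this
    have h2c : cos x = 2 * cos (x / 2) ^ 2 - 1 := by
      have := cos_two_mul (x / 2)
      rwa [show 2 * (x / 2) = x by ring] at this
    have hsh : sin (x / 2) ≠ 0 := by
      intro h
      apply hs
      rw [h2s, h]
      ring
    have hc' : 2 * cos (x / 2) ^ 2 - 1 ≠ 0 := by rw [← h2c]; exact hc.ne'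
    have pyth : sin (x / 2) ^ 2 + cos (x / 2) ^ 2 = 1 := sin_sq_add_cos_sq (x / 2)
    have hfin : l / sin x * (π / c - π) = l * π * (tan x - tan (x / 2)) := by
      rw [tan_eq_sin_div_cos, tan_eq_sin_div_cos, hcdef, h2s, h2c]
      field_simp
      linear_combination (-2 * l) * pyth
    rw [hgT, hfin]
end
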